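/- For all complex numbers x₀, x₁, x₂, x₃, x₄: if x₂² - x₁x₃ = 0, x₁x₂ - x₀x₃ = 0, x₁² - x₀x₂ = 0 and x₀x₁ - 5x₁² - 8x₁x₂ + 8x₂² + 5x₂x₃ - 4x₃² - x₄² = 0, then both x₀x₁ - 5x₁² - 9x₁x₂ + 8x₂² + x₀x₃ + 5x₂x₃ - 4x₃² - x₄² = 0 and x₀²x₁ - 1204x₀x₂x₃ - 1291x₀x₃² + 1721x₁x₃² + 853x₂x₃² - 788x₃³ + x₁x₂x₄ - x₀x₃x₄ - x₀x₄² - 5x₁x₄² - 33x₂x₄² - 197x₃x₄² = 0. (The K3 surface X₆ of degree 6 contains the degree-6, genus-2 curve C₆.) -/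
import Mathlib

/-- The K3 surface `X₆` of degree 6 contains the degree-6, genus-2 curve `C₆`. -/
theorem X6_contains_curve_C6 (x₀ x₁ x₂ x₃ x₄ : ℂ)
    (h1 : x₂ ^ 2 - x₁ * x₃ = 0)
    (h2 : x₁ * x₂ - x₀ * x₃ = 0)
    (h3 : x₁ ^ 2 - x₀ * x₂ = 0)
    (h4 : x₀ * x₁ - 5 * x₁ ^ 2 - 8 * x₁ * x₂ + 8 * x₂ ^ 2 + 5 * x₂ * x₃
      - 4 * x₃ ^ 2 - x₄ ^ 2 = 0) :
    (x₀ * x₁ - 5 * x₁ ^ 2 - 9 * x₁ * x₂ + 8 * x₂ ^ 2 + x₀ * x₃ + 5 * x₂ * x₃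
        - 4 * x₃ ^ 2 - x₄ ^ 2 = 0) ∧
    (x₀ ^ 2 * x₁ - 1204 * x₀ * x₂ * x₃ - 1291 * x₀ * x₃ ^ 2 + 1721 * x₁ * x₃ ^ 2
        + 853 * x₂ * x₃ ^ 2 - 788 * x₃ ^ 3 + x₁ * x₂ * x₄ - x₀ * x₃ * x₄
        - x₀ * x₄ ^ 2 - 5 * x₁ * x₄ ^ 2 - 33 * x₂ * x₄ ^ 2
        - 197 * x₃ * x₄ ^ 2 = 0) := by
  constructor
  · linear_combination h4 - h2
  · linear_combination ((-8) * x₀ + (-985) * x₁ + (-264) * x₂ + (-1741) * x₃) * h1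
      + (205 * x₁ + 1209 * x₂ + 1287 * x₃ + x₄) * h2
      + (25 * x₁) * h3
      + (x₀ + 5 * x₁ + 33 * x₂ + 197 * x₃) * h4
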